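/- Let p > 2 be a prime and let λ be a unit of the ring ℤ_p of p-adic integers. Then the subgroup of ℤ_p^* generated by λ (the set of integer powers λ^m, m ∈ ℤ) is dense in ℤ_p^* (for the topology induced from ℤ_p) if and only if the image of λ under the reduction map ℤ_p → ℤ/pℤ has multiplicative order p−1 and λ^{p−1} − 1 has p-adic valuation exactly 1. -/

import Mathlib

open PadicInt

section Aux

variable {p : ℕ} [hp : Fact p.Prime]


private lemma aux_one_add_pow (R : Type*) [CommRing R] (a : R) (c : ℕ) :
    ∃ s : R, (1 + a) ^ c = 1 + c * a + a ^ 2 * s := by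
  induction c with
  | zero => exact ⟨0, by simp⟩
  | succ n ih =>
    obtain ⟨s, hs⟩ := ih
    refine ⟨s * (1 + a) + n, ?_⟩
    rw [pow_succ, hs]
    push_cast
    ring

private lemma aux_one_add_pow_prime (R : Type*) [CommRing R] (a : R) :
    ∃ s : R, (1 + a) ^ p = 1 + p * a + p * a ^ 2 * s + a ^ p := by
  have hplt : 1 < p := hp.out.one_lt
  have h := add_pow a 1 p
  simp only [one_pow, mul_one] at h
  have hd : ∀ k ∈ Finset.Ico 2 p, (p : R) * a ^ 2 ∣ a ^ k * (p.choose k : R) := by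
    intro k hk
    rw [Finset.mem_Ico] at hk
    obtain ⟨t, ht⟩ := hp.out.dvd_choose_self (by omega : k ≠ 0) hk.2
    refine ⟨a ^ (k - 2) * t, ?_⟩
    rw [ht]
    push_cast
    rw [show a ^ k = a ^ 2 * a ^ (k - 2) by rw [← pow_add]; congr 1; omega]
    ring
  obtain ⟨s, hs⟩ := Finset.dvd_sum hd
  refine ⟨s, ?_⟩
  have h0 : (a + 1) ^ p = (∑ k ∈ Finset.range p, a ^ k * (p.choose k : R)) + a ^ p := by
    rw [h, Finset.sum_range_succ, Nat.choose_self]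
    push_cast
    ring
  rw [Finset.range_eq_Ico, Finset.sum_eq_sum_Ico_succ_bot (by omega : 0 < p),
    Finset.sum_eq_sum_Ico_succ_bot (by omega : 1 < p)] at h0
  simp only [pow_zero, Nat.choose_zero_right, Nat.choose_one_right, pow_one, Nat.cast_one,
    one_mul] at h0
  rw [show (1 + a) = a + 1 by ring, h0, hs]
  push_cast
  ring

private lemma aux_norm_le_of_dvd {a b : ℤ_[p]} (h : a ∣ b) : ‖b‖ ≤ ‖a‖ := by
  obtain ⟨t, rfl⟩ := h
  rw [norm_mul]
  calc ‖a‖ * ‖t‖ ≤ ‖a‖ * 1 := by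
        exact mul_le_mul_of_nonneg_left (PadicInt.norm_le_one t) (norm_nonneg a)
    _ = ‖a‖ := mul_one _

private lemma aux_toZMod_zero_iff (z : ℤ_[p]) :
    toZMod z = 0 ↔ ‖z‖ ≤ (p : ℝ) ^ (-1 : ℤ) := by
  have h := PadicInt.norm_le_pow_iff_mem_span_pow z 1
  rw [pow_one] at h
  rw [show ((-1 : ℤ) = -(1:ℕ)) by norm_num, h, ← maximalIdeal_eq_span_p, ← ker_toZMod,
    RingHom.mem_ker]

private lemma aux_norm_upow_coprime (u : ℤ_[p]) (hu : ‖u - 1‖ < 1) {e : ℕ}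
    (he : ¬ (p ∣ e)) : ‖u ^ e - 1‖ = ‖u - 1‖ := by
  have hg : ‖(∑ i ∈ Finset.range e, u ^ i)‖ = 1 := by
    have hdvd : (u - 1) ∣ (∑ i ∈ Finset.range e, u ^ i) - (e : ℤ_[p]) := by
      have h1 : (∑ i ∈ Finset.range e, u ^ i) - (e : ℤ_[p])
          = ∑ i ∈ Finset.range e, (u ^ i - 1) := by
        rw [Finset.sum_sub_distrib]
        simp
      rw [h1]
      exact Finset.dvd_sum fun i _ => by simpa using sub_dvd_pow_sub_pow u 1 i
    have h2 : ‖(∑ i ∈ Finset.range e, u ^ i) - (e : ℤ_[p])‖ < 1 :=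
      lt_of_le_of_lt (aux_norm_le_of_dvd hdvd) hu
    have h3 : ‖(e : ℤ_[p])‖ = 1 := by
      have h4 := PadicInt.norm_int_lt_one_iff_dvd (p := p) (e : ℤ)
      have h5 : ¬ ((p : ℤ) ∣ (e : ℤ)) := by exact_mod_cast he
      have h6 : ¬ ‖((e : ℤ) : ℤ_[p])‖ < 1 := fun hc => h5 (h4.mp hc)
      push_cast at h6
      have h7 : ‖(e : ℤ_[p])‖ ≤ 1 := PadicInt.norm_le_one _
      rcases eq_or_lt_of_le h7 with h | h
      · exact h
      · exact absurd h h6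
    have h8 : (∑ i ∈ Finset.range e, u ^ i)
        = (e : ℤ_[p]) + ((∑ i ∈ Finset.range e, u ^ i) - (e : ℤ_[p])) := by ring
    rw [h8, PadicInt.norm_add_eq_max_of_ne (by rw [h3]; exact (ne_of_lt h2).symm), h3]
    exact max_eq_left h2.le
  have h9 : u ^ e - 1 = (∑ i ∈ Finset.range e, u ^ i) * (u - 1) := (geom_sum_mul u e).symm
  rw [h9, norm_mul, hg, one_mul]

private lemma aux_dvd_of_norm_le {w b : ℤ_[p]} {n : ℕ} (hw : ‖w‖ = (p : ℝ) ^ (-(n : ℤ)))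
    (hb : ‖b‖ ≤ (p : ℝ) ^ (-(n : ℤ))) : w ∣ b := by
  have hp1 : (1 : ℝ) < p := by exact_mod_cast hp.out.one_lt
  have hw0 : w ≠ 0 := by
    intro h
    rw [h, norm_zero] at hw
    have : (0:ℝ) < (p : ℝ) ^ (-(n : ℤ)) := by positivity
    rw [← hw] at this
    exact lt_irrefl 0 this
  have hval : w.valuation = n := by
    have h1 := PadicInt.norm_eq_zpow_neg_valuation hw0
    rw [h1] at hw
    have h2 := zpow_right_injective₀ (by positivity : (0:ℝ) < p) (ne_of_gt hp1) hw
    omega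
  have hmem : b ∈ Ideal.span {(p : ℤ_[p]) ^ n} := by
    rw [← PadicInt.norm_le_pow_iff_mem_span_pow]
    exact hb
  rw [Ideal.mem_span_singleton] at hmem
  obtain ⟨t, ht⟩ := hmem
  have hw2 : w = (unitCoeff hw0 : ℤ_[p]) * (p : ℤ_[p]) ^ n := by
    conv_lhs => rw [unitCoeff_spec hw0]
    rw [hval]
  obtain ⟨U, hU⟩ : ∃ U : ℤ_[p]ˣ, w = (U : ℤ_[p]) * (p : ℤ_[p]) ^ n := ⟨unitCoeff hw0, hw2⟩
  refine ⟨((U⁻¹ : ℤ_[p]ˣ) : ℤ_[p]) * t, ?_⟩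
  rw [ht, hU, mul_mul_mul_comm, ← Units.val_mul, mul_inv_cancel, Units.val_one, one_mul]

private lemma aux_norm_zpow_sub_one (v : ℤ_[p]ˣ) (k : ℤ) :
    ‖((v ^ k : ℤ_[p]ˣ) : ℤ_[p]) - 1‖ ≤ ‖(v : ℤ_[p]) - 1‖ := by
  have hnat : ∀ m : ℕ, ‖(v : ℤ_[p]) ^ m - 1‖ ≤ ‖(v : ℤ_[p]) - 1‖ := fun m =>
    aux_norm_le_of_dvd (by simpa using sub_dvd_pow_sub_pow (v : ℤ_[p]) 1 m)
  rcases le_or_gt 0 k with hk | hk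
  · lift k to ℕ using hk
    rw [zpow_natCast, Units.val_pow_eq_pow_val]
    exact hnat k
  · have h1 : ((v ^ k : ℤ_[p]ˣ) : ℤ_[p]) - 1
        = ((v ^ k : ℤ_[p]ˣ) : ℤ_[p]) * (1 - ((v ^ (-k) : ℤ_[p]ˣ) : ℤ_[p])) := by
      rw [mul_sub, mul_one, ← Units.val_mul, ← zpow_add, add_neg_cancel, zpow_zero,
        Units.val_one]
    rw [h1, norm_mul, PadicInt.norm_units, one_mul, norm_sub_rev]
    have h2 : (0:ℤ) ≤ -k := by omega
    lift (-k) to ℕ using h2 with m hm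
    rw [zpow_natCast, Units.val_pow_eq_pow_val]
    exact hnat m
private lemma aux_norm_pow (a : ℤ_[p]) (m : ℕ) : ‖a ^ m‖ = ‖a‖ ^ m := by
  induction m with
  | zero => simp
  | succ k ih => rw [pow_succ, pow_succ, norm_mul, ih]

private lemma aux_norm_upow_p (hp3 : 2 < p) (u : ℤ_[p]) (n : ℕ)
    (h : ‖u - 1‖ = (p : ℝ) ^ (-(n + 1 : ℤ))) :
    ‖u ^ p - 1‖ = (p : ℝ) ^ (-(n + 2 : ℤ)) := by
  have hp1 : (1 : ℝ) < p := by exact_mod_cast hp.out.one_lt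
  have hp0 : (p : ℝ) ≠ 0 := by positivity
  set a := u - 1 with ha
  obtain ⟨s, hs⟩ := aux_one_add_pow_prime (p := p) ℤ_[p] a
  have hu : u ^ p - 1 = (p : ℤ_[p]) * a + ((p : ℤ_[p]) * a ^ 2 * s + a ^ p) := by
    have h1 : u = 1 + a := by rw [ha]; ring
    rw [h1, hs]
    ring
  have hpa : ‖(p : ℤ_[p]) * a‖ = (p : ℝ) ^ (-(n + 2 : ℤ)) := by
    rw [norm_mul, PadicInt.norm_p, h, ← zpow_neg_one, ← zpow_add₀ hp0]
    congr 1
    ring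
  have hrest : ‖(p : ℤ_[p]) * a ^ 2 * s + a ^ p‖ ≤ (p : ℝ) ^ (-(n + 3 : ℤ)) := by
    refine le_trans (PadicInt.nonarchimedean _ _) (max_le ?_ ?_)
    · have h1 : ‖(p : ℤ_[p]) * a ^ 2 * s‖ ≤ (p : ℝ) ^ (-(2 * (n:ℤ) + 3)) := by
        rw [norm_mul, norm_mul, PadicInt.norm_p, pow_two,
          norm_mul, h]
        calc (p:ℝ)⁻¹ * ((p:ℝ) ^ (-(n + 1 : ℤ)) * (p:ℝ) ^ (-(n + 1 : ℤ))) * ‖s‖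
            ≤ (p:ℝ)⁻¹ * ((p:ℝ) ^ (-(n + 1 : ℤ)) * (p:ℝ) ^ (-(n + 1 : ℤ))) * 1 := by
              refine mul_le_mul_of_nonneg_left (PadicInt.norm_le_one s) (by positivity)
          _ = (p:ℝ) ^ (-(2 * (n:ℤ) + 3)) := by
              rw [← zpow_neg_one, ← zpow_add₀ hp0, ← zpow_add₀ hp0]
              congr 1
              ring
      refine le_trans h1 (zpow_le_zpow_right₀ hp1.le (by omega))
    · have h2 : ‖a ^ p‖ = ((p : ℝ) ^ (-(n + 1 : ℤ))) ^ p := by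
        rw [← h, aux_norm_pow]
      rw [h2, ← zpow_natCast ((p:ℝ) ^ (-(n + 1 : ℤ))), ← zpow_mul]
      refine zpow_le_zpow_right₀ hp1.le ?_
      have hp3' : (3 : ℤ) ≤ p := by exact_mod_cast hp3
      have hn0 : (0 : ℤ) ≤ (n : ℤ) := Int.ofNat_nonneg n
      nlinarith
  have hne : ‖(p : ℤ_[p]) * a ^ 2 * s + a ^ p‖ ≠ ‖(p : ℤ_[p]) * a‖ := by
    rw [hpa]
    refine ne_of_lt (lt_of_le_of_lt hrest ?_)
    exact zpow_lt_zpow_right₀ hp1 (by omega)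
  rw [hu, PadicInt.norm_add_eq_max_of_ne hne.symm, hpa]
  refine max_eq_left (le_trans hrest ?_)
  exact le_of_lt (zpow_lt_zpow_right₀ hp1 (by omega))

end Aux

/-- For an odd prime `p` and a unit `λ` of `ℤ_p`, the subgroup of `ℤ_p^*` generated by `λ`
(the integer powers of `λ`) is dense in `ℤ_p^*` (for the topology induced from `ℤ_p`,
i.e. every unit of `ℤ_p` is a limit of integer powers of `λ`) if and only if
the reduction of `λ` mod `p` has multiplicative order `p − 1` and
`λ^(p−1) − 1` has `p`-adic valuation exactly `1`. -/
theorem dense_powers_iff (p : ℕ) [Fact p.Prime] (hp : p > 2) (lam : ℤ_[p]ˣ) :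
    (∀ x : ℤ_[p], IsUnit x →
        x ∈ closure (Set.range fun m : ℤ => ((lam ^ m : ℤ_[p]ˣ) : ℤ_[p]))) ↔
    (orderOf (PadicInt.toZMod (lam : ℤ_[p])) = p - 1 ∧
      (((lam : ℤ_[p]) ^ (p - 1) - 1)).valuation = 1) := by
  have hp1 : (1 : ℝ) < p := by exact_mod_cast (Fact.out : p.Prime).one_lt
  have hp0 : (p : ℝ) ≠ 0 := by positivity
  have hcard : Fintype.card (ZMod p)ˣ = p - 1 := by
    rw [ZMod.card_units_eq_totient, Nat.totient_prime Fact.out]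
  set w : (ZMod p)ˣ := Units.map (PadicInt.toZMod (p := p)).toMonoidHom lam with hw
  have hwv : (w : ZMod p) = PadicInt.toZMod (lam : ℤ_[p]) := rfl
  have hwzpow : ∀ m : ℤ, ((w ^ m : (ZMod p)ˣ) : ZMod p)
      = PadicInt.toZMod ((lam ^ m : ℤ_[p]ˣ) : ℤ_[p]) := by
    intro m
    rw [hw, ← map_zpow]
    rfl
  constructor
  · intro hdens
    have hsurj : ∀ c : (ZMod p)ˣ, ∃ m : ℤ, w ^ m = c := by
      intro c
      set x : ℤ_[p] := (((c : ZMod p).val : ℕ) : ℤ_[p]) with hxdef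
      have hx : PadicInt.toZMod x = (c : ZMod p) := by
        rw [hxdef, map_natCast]
        exact ZMod.natCast_rightInverse _
      have hxu : IsUnit x := by
        rw [PadicInt.isUnit_iff]
        by_contra hne
        have hlt : ‖x‖ < 1 := lt_of_le_of_ne (PadicInt.norm_le_one x) hne
        have hle : ‖x‖ ≤ (p : ℝ) ^ (-1 : ℤ) := by
          have := (PadicInt.norm_lt_pow_iff_norm_le_pow_sub_one x 0).mp (by simpa using hlt)
          simpa using this
        have h0 := (aux_toZMod_zero_iff x).mpr hle
        rw [hx] at h0
        exact c.ne_zero h0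
      obtain ⟨y, ⟨m, rfl⟩, hy⟩ := (Metric.mem_closure_iff.mp (hdens x hxu)) 1 one_pos
      refine ⟨m, Units.ext ?_⟩
      rw [dist_eq_norm, norm_sub_rev] at hy
      have hy2 : ‖((lam ^ m : ℤ_[p]ˣ) : ℤ_[p]) - x‖ ≤ (p : ℝ) ^ (-1 : ℤ) := by
        have := (PadicInt.norm_lt_pow_iff_norm_le_pow_sub_one _ 0).mp (by simpa using hy)
        simpa using this
      have h0 := (aux_toZMod_zero_iff _).mpr hy2
      rw [map_sub, hx, sub_eq_zero] at h0
      rw [hwzpow m, h0]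
    have horder : orderOf w = p - 1 := by
      rw [← hcard, ← Nat.card_eq_fintype_card]
      exact orderOf_eq_card_of_forall_mem_zpowers fun c => by
        obtain ⟨m, hm⟩ := hsurj c
        exact Subgroup.mem_zpowers_iff.mpr ⟨m, hm⟩
    constructor
    · rw [← hwv, orderOf_units, horder]
    · -- valuation part
      have hwpow1 : w ^ (p - 1) = 1 := by rw [← hcard]; exact pow_card_eq_one
      have hfermat : ‖(lam : ℤ_[p]) ^ (p - 1) - 1‖ ≤ (p : ℝ) ^ (-1 : ℤ) := by
        apply (aux_toZMod_zero_iff _).mp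
        rw [map_sub, map_pow, map_one, ← hwv, ← Units.val_pow_eq_pow_val, hwpow1,
          Units.val_one, sub_self]
      have hnorm : ‖(lam : ℤ_[p]) ^ (p - 1) - 1‖ = (p : ℝ) ^ (-1 : ℤ) := by
        rcases eq_or_lt_of_le hfermat with h | h
        · exact h
        · exfalso
          have hle2 : ‖(lam : ℤ_[p]) ^ (p - 1) - 1‖ ≤ (p : ℝ) ^ (-2 : ℤ) := by
            have := (PadicInt.norm_lt_pow_iff_norm_le_pow_sub_one _ (-1)).mp h
            simpa using this
          have hx0 : IsUnit (1 + (p : ℤ_[p])) := by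
            rw [PadicInt.isUnit_iff]
            by_contra hne
            have hlt : ‖1 + (p : ℤ_[p])‖ < 1 :=
              lt_of_le_of_ne (PadicInt.norm_le_one _) hne
            have hle : ‖1 + (p : ℤ_[p])‖ ≤ (p : ℝ) ^ (-1 : ℤ) := by
              have := (PadicInt.norm_lt_pow_iff_norm_le_pow_sub_one _ 0).mp (by simpa using hlt)
              simpa using this
            have h0 := (aux_toZMod_zero_iff _).mpr hle
            rw [map_add, map_one, map_natCast, ZMod.natCast_self, add_zero] at h0
            exact one_ne_zero h0
          obtain ⟨y, ⟨m, rfl⟩, hy⟩ :=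
            (Metric.mem_closure_iff.mp (hdens _ hx0)) ((p : ℝ) ^ (-1 : ℤ)) (by positivity)
          rw [dist_eq_norm, norm_sub_rev] at hy
          have hy2 : ‖((lam ^ m : ℤ_[p]ˣ) : ℤ_[p]) - (1 + (p : ℤ_[p]))‖ ≤ (p : ℝ) ^ (-2 : ℤ) := by
            have := (PadicInt.norm_lt_pow_iff_norm_le_pow_sub_one _ (-1)).mp hy
            simpa using this
          have hz1 : PadicInt.toZMod ((lam ^ m : ℤ_[p]ˣ) : ℤ_[p]) = 1 := by
            have hle : ‖((lam ^ m : ℤ_[p]ˣ) : ℤ_[p]) - (1 + (p : ℤ_[p]))‖ ≤ (p : ℝ) ^ (-1 : ℤ) :=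
              le_trans hy2 (zpow_le_zpow_right₀ hp1.le (by norm_num))
            have h0 := (aux_toZMod_zero_iff _).mpr hle
            rw [map_sub, map_add, map_one, map_natCast, ZMod.natCast_self, add_zero,
              sub_eq_zero] at h0
            exact h0
          have hwm : w ^ m = 1 := by
            apply Units.ext
            rw [hwzpow m, hz1, Units.val_one]
          obtain ⟨k, hk⟩ := orderOf_dvd_iff_zpow_eq_one.mpr hwm
          set d := orderOf w with hd
          have hddvd : d ∣ p - 1 := by rw [← hcard]; exact orderOf_dvd_card
          obtain ⟨e, he⟩ := hddvd
          have hpe : ¬ p ∣ e := by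
            intro hc
            have h1 : p ∣ p - 1 := he ▸ Dvd.dvd.mul_left hc d
            have h2 := Nat.le_of_dvd (by omega) h1
            omega
          have hwd1 : w ^ d = 1 := pow_orderOf_eq_one w
          have hud : PadicInt.toZMod ((lam ^ d : ℤ_[p]ˣ) : ℤ_[p]) = 1 := by
            have := hwzpow (d : ℤ)
            rw [zpow_natCast, zpow_natCast, hwd1, Units.val_one] at this
            exact this.symm
          have hule : ‖((lam ^ d : ℤ_[p]ˣ) : ℤ_[p]) - 1‖ ≤ (p : ℝ) ^ (-1 : ℤ) := by
            apply (aux_toZMod_zero_iff _).mp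
            rw [map_sub, map_one, hud, sub_self]
          have hlt1 : ‖((lam ^ d : ℤ_[p]ˣ) : ℤ_[p]) - 1‖ < 1 := by
            refine lt_of_le_of_lt hule ?_
            have := zpow_lt_zpow_right₀ hp1 (show (-1 : ℤ) < 0 by norm_num)
            simpa using this
          have hue : ((lam ^ d : ℤ_[p]ˣ) : ℤ_[p]) ^ e = (lam : ℤ_[p]) ^ (p - 1) := by
            rw [Units.val_pow_eq_pow_val, ← pow_mul, ← he]
          have hule2 : ‖((lam ^ d : ℤ_[p]ˣ) : ℤ_[p]) - 1‖ ≤ (p : ℝ) ^ (-2 : ℤ) := by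
            rw [← aux_norm_upow_coprime _ hlt1 hpe, hue]
            exact hle2
          have hmle : ‖((lam ^ m : ℤ_[p]ˣ) : ℤ_[p]) - 1‖ ≤ (p : ℝ) ^ (-2 : ℤ) := by
            have heq : lam ^ m = (lam ^ d) ^ k := by
              rw [hk, zpow_mul, zpow_natCast]
            rw [heq]
            exact le_trans (aux_norm_zpow_sub_one (lam ^ d) k) hule2
          have hple : ‖(p : ℤ_[p])‖ ≤ (p : ℝ) ^ (-2 : ℤ) := by
            have hident : (p : ℤ_[p]) = (((lam ^ m : ℤ_[p]ˣ) : ℤ_[p]) - 1)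
                + (-(((lam ^ m : ℤ_[p]ˣ) : ℤ_[p]) - (1 + (p : ℤ_[p])))) := by ring
            rw [hident]
            refine le_trans (PadicInt.nonarchimedean _ _) (max_le hmle ?_)
            rw [norm_neg]
            exact hy2
          rw [PadicInt.norm_p] at hple
          have hcontra : (p : ℝ) ^ (-2 : ℤ) < (p : ℝ)⁻¹ := by
            rw [← zpow_neg_one]
            exact zpow_lt_zpow_right₀ hp1 (by norm_num)
          linarith
      have hz0 : (lam : ℤ_[p]) ^ (p - 1) - 1 ≠ 0 := by
        intro h
        rw [h, norm_zero] at hnorm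
        have hpos : (0 : ℝ) < (p : ℝ) ^ (-1 : ℤ) := by positivity
        linarith
      have h1 := PadicInt.norm_eq_zpow_neg_valuation hz0
      rw [h1] at hnorm
      have h2 := zpow_right_injective₀ (by positivity : (0 : ℝ) < p) (ne_of_gt hp1) hnorm
      omega
  · rintro ⟨hord, hval⟩ x hx
    have hz0 : (lam : ℤ_[p]) ^ (p - 1) - 1 ≠ 0 := by
      intro h
      rw [h, PadicInt.valuation_zero] at hval
      exact one_ne_zero hval.symm
    have hnorm : ‖(lam : ℤ_[p]) ^ (p - 1) - 1‖ = (p : ℝ) ^ (-1 : ℤ) := by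
      rw [PadicInt.norm_eq_zpow_neg_valuation hz0, hval, Nat.cast_one]
    have horder : orderOf w = p - 1 := by rw [← orderOf_units, hwv]; exact hord
    have hgen : ∀ c : (ZMod p)ˣ, ∃ r : ℕ, w ^ r = c := by
      intro c
      have htop : Subgroup.zpowers w = ⊤ := by
        apply Subgroup.eq_top_of_card_eq
        rw [Nat.card_zpowers, horder, Nat.card_eq_fintype_card, hcard]
      have hc : c ∈ Submonoid.powers w := by
        rw [mem_powers_iff_mem_zpowers, htop]
        trivial
      obtain ⟨r, hr⟩ := hc
      exact ⟨r, hr⟩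
    have hiter : ∀ n : ℕ, ‖(lam : ℤ_[p]) ^ ((p - 1) * p ^ n) - 1‖ = (p : ℝ) ^ (-((n : ℤ) + 1)) := by
      intro n
      induction n with
      | zero => simpa using hnorm
      | succ n ih =>
        have h1 : (p - 1) * p ^ (n + 1) = ((p - 1) * p ^ n) * p := by ring
        rw [h1, pow_mul]
        rw [aux_norm_upow_p hp ((lam : ℤ_[p]) ^ ((p - 1) * p ^ n)) n ih]
        norm_cast
    have key : ∀ n : ℕ, ∃ m : ℕ, ‖(lam : ℤ_[p]) ^ m - x‖ ≤ (p : ℝ) ^ (-((n : ℤ) + 1)) := by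
      intro n
      induction n with
      | zero =>
        have hxz : PadicInt.toZMod x ≠ 0 := by
          intro h
          have h1 := (aux_toZMod_zero_iff x).mp h
          rw [PadicInt.isUnit_iff.mp hx] at h1
          have h2 : (p : ℝ) ^ (-1 : ℤ) < 1 := by
            have := zpow_lt_zpow_right₀ hp1 (show (-1 : ℤ) < 0 by norm_num)
            simpa using this
          linarith
        obtain ⟨c, hc⟩ := isUnit_iff_ne_zero.mpr hxz
        obtain ⟨r, hr⟩ := hgen c
        refine ⟨r, ?_⟩
        have h0 : PadicInt.toZMod ((lam : ℤ_[p]) ^ r - x) = 0 := by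
          rw [map_sub, map_pow, ← hwv, ← Units.val_pow_eq_pow_val, hr, hc, sub_self]
        have h1 := (aux_toZMod_zero_iff _).mp h0
        simpa using h1
      | succ n ih =>
        obtain ⟨m, hm⟩ := ih
        set a : ℤ_[p] := (lam : ℤ_[p]) ^ ((p - 1) * p ^ n) - 1 with hadef
        have hna : ‖a‖ = (p : ℝ) ^ (-((n : ℤ) + 1)) := hiter n
        have hnm : ‖(lam : ℤ_[p]) ^ m‖ = 1 := by
          rw [← Units.val_pow_eq_pow_val]
          exact PadicInt.norm_units _
        have hwnorm : ‖(lam : ℤ_[p]) ^ m * a‖ = (p : ℝ) ^ (-((n + 1 : ℕ) : ℤ)) := by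
          rw [norm_mul, hnm, one_mul, hna]
          norm_cast
        have hbnorm : ‖x - (lam : ℤ_[p]) ^ m‖ ≤ (p : ℝ) ^ (-((n + 1 : ℕ) : ℤ)) := by
          rw [norm_sub_rev]
          refine le_trans hm (le_of_eq ?_)
          norm_cast
        obtain ⟨z, hz⟩ := aux_dvd_of_norm_le hwnorm hbnorm
        set c : ℕ := (PadicInt.toZMod z).val with hcdef
        have hcz : ‖(c : ℤ_[p]) - z‖ ≤ (p : ℝ) ^ (-1 : ℤ) := by
          apply (aux_toZMod_zero_iff _).mp
          rw [map_sub, map_natCast, hcdef, ZMod.natCast_rightInverse _, sub_self]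
        obtain ⟨s, hsr⟩ := aux_one_add_pow ℤ_[p] a c
        refine ⟨m + (p - 1) * p ^ n * c, ?_⟩
        have ha1 : (1 : ℤ_[p]) + a = (lam : ℤ_[p]) ^ ((p - 1) * p ^ n) := by
          rw [hadef]; ring
        have heq : (lam : ℤ_[p]) ^ (m + (p - 1) * p ^ n * c) - x
            = (lam : ℤ_[p]) ^ m * a * ((c : ℤ_[p]) - z) + (lam : ℤ_[p]) ^ m * (a ^ 2 * s) := by
          rw [pow_add, pow_mul, ← ha1, hsr,
            show x = (lam : ℤ_[p]) ^ m + ((lam : ℤ_[p]) ^ m * a) * z from by rw [← hz]; ring]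
          ring
        rw [heq]
        refine le_trans (PadicInt.nonarchimedean _ _) (max_le ?_ ?_)
        · rw [norm_mul, hwnorm]
          refine le_trans (mul_le_mul_of_nonneg_left hcz (by positivity)) ?_
          rw [← zpow_add₀ hp0]
          refine zpow_le_zpow_right₀ hp1.le ?_
          push_cast
          omega
        · rw [norm_mul, hnm, one_mul, norm_mul, aux_norm_pow, hna]
          calc ((p : ℝ) ^ (-((n : ℤ) + 1))) ^ 2 * ‖s‖
              ≤ ((p : ℝ) ^ (-((n : ℤ) + 1))) ^ 2 * 1 :=
                mul_le_mul_of_nonneg_left (PadicInt.norm_le_one s) (by positivity)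
            _ = (p : ℝ) ^ (-((n : ℤ) + 1) * 2) := by
                rw [mul_one, ← zpow_natCast ((p : ℝ) ^ (-((n : ℤ) + 1))), ← zpow_mul]
                norm_num
            _ ≤ (p : ℝ) ^ (-(((n : ℕ) : ℤ) + 1) + -1) :=
                zpow_le_zpow_right₀ hp1.le (by omega)
            _ = (p : ℝ) ^ (-(((n + 1 : ℕ) : ℤ)) + -1) := by push_cast; ring_nf
            _ ≤ (p : ℝ) ^ (-((((n + 1 : ℕ)) : ℤ) + 1)) :=
                zpow_le_zpow_right₀ hp1.le (by omega)
    rw [Metric.mem_closure_iff]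
    intro ε hε
    obtain ⟨k, hk⟩ := PadicInt.exists_pow_neg_lt p hε
    obtain ⟨m, hm⟩ := key k
    refine ⟨((lam ^ (m : ℤ) : ℤ_[p]ˣ) : ℤ_[p]), ⟨(m : ℤ), rfl⟩, ?_⟩
    rw [dist_eq_norm]
    have hcast : ((lam ^ (m : ℤ) : ℤ_[p]ˣ) : ℤ_[p]) = (lam : ℤ_[p]) ^ m := by
      rw [zpow_natCast, Units.val_pow_eq_pow_val]
    rw [hcast, norm_sub_rev]
    refine lt_of_le_of_lt (le_trans hm ?_) hk
    exact zpow_le_zpow_right₀ hp1.le (by omega)
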